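/- Let C be a cartesian closed category with a fixed object S, and T the state monad T X = (S × X)^S. Let (X, h) be a T-algebra and f_X = h ∘ (q_{S×X})^* : S × X ⟶ X. Then r = h ∘ θ_X : X^S ⟶ X is a retraction of the transpose f_X^* : X ⟶ X^S, i.e. h ∘ θ_X ∘ f_X^* = id_X, where θ_X = ⟨p_{X^S}, ε_X⟩^* : X^S ⟶ T X. -/

import Mathlib

open CategoryTheory CategoryTheory.MonoidalCategory CategoryTheory.Limits
  CategoryTheory.CartesianMonoidalCategory CategoryTheory.CartesianClosed

/-- In a cartesian closed category `C` with a fixed object `S`, for the state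
monad `T X = (S × X)^S` and a `T`-algebra `(X, h)` with `f_X = h ∘ (q_{S×X})^*`, the morphism
`r = h ∘ θ_X : X^S ⟶ X` is a retraction of the transpose `f_X^* : X ⟶ X^S`, where
`θ_X = ⟨p_{X^S}, ε_X⟩^*`. -/
theorem stmt4 {C : Type u} [Category.{v} C] [CartesianMonoidalCategory C] [MonoidalClosed C]
    (S : C) (A : ((ihom.adjunction S).toMonad).Algebra) :
    MonoidalClosed.curry (MonoidalClosed.curry (snd S (S ⊗ A.A)) ≫ A.a) ≫
      MonoidalClosed.curry (lift (fst S (S ⟹ A.A)) ((ihom.ev S).app A.A)) ≫ A.a =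
      𝟙 A.A := by
  have h1 : MonoidalClosed.curry (MonoidalClosed.curry (snd S (S ⊗ A.A)) ≫ A.a) ≫
      MonoidalClosed.curry (lift (fst S (S ⟹ A.A)) ((ihom.ev S).app A.A)) =
      MonoidalClosed.curry
        (lift (fst S A.A) (MonoidalClosed.curry (snd S (S ⊗ A.A))) ≫
          (S ◁ A.a)) := by
    rw [← MonoidalClosed.curry_natural_left]
    congr 1
    apply CartesianMonoidalCategory.hom_ext <;>
      simp [← MonoidalClosed.uncurry_eq, MonoidalClosed.uncurry_curry]
    · erw [CartesianMonoidalCategory.whiskerLeft_fst, lift_fst]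
    · erw [CartesianMonoidalCategory.whiskerLeft_snd, lift_snd_assoc]
  erw [reassoc_of% h1]
  rw [MonoidalClosed.curry_natural_right]
  have h2 : (ihom S).map (S ◁ A.a) = ((ihom.adjunction S).toMonad).map A.a := rfl
  erw [h2]
  erw [Category.assoc, ← A.assoc]
  have h3 : ((ihom.adjunction S).toMonad).μ.app A.A =
      (ihom S).map ((ihom.ev S).app (S ⊗ A.A)) := by
    simp [Adjunction.toMonad]
  erw [h3, ← Category.assoc, ← MonoidalClosed.curry_natural_right]
  have h4 : lift (fst S A.A) (MonoidalClosed.curry (snd S (S ⊗ A.A))) ≫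
      (ihom.ev S).app (S ⊗ A.A) = 𝟙 (S ⊗ A.A) := by
    have : lift (fst S A.A) (MonoidalClosed.curry (snd S (S ⊗ A.A))) =
        lift (fst S A.A) (𝟙 (S ⊗ A.A)) ≫ (S ◁ MonoidalClosed.curry (snd S (S ⊗ A.A))) := by
      apply CartesianMonoidalCategory.hom_ext <;> simp
    rw [this, Category.assoc, ← MonoidalClosed.uncurry_eq, MonoidalClosed.uncurry_curry]
    simp
  have h5 : MonoidalClosed.curry (𝟙 (S ⊗ A.A)) = ((ihom.adjunction S).toMonad).η.app A.A := by
    show ((ihom.adjunction S).homEquiv _ _) (𝟙 (S ⊗ A.A)) = _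
    rw [Adjunction.homEquiv_unit]
    simp [Adjunction.toMonad]
  erw [h4, h5, A.unit]
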